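/- For all integers m, n ≥ 1 the following identities hold: (i) I(m−1,n,0)·m² + I(m,n−1,0)·n² = ½·I(m,n,0)·(m+n+1)(m+n); (ii) I(m−1,n,1)·m² + I(m,n−1,1)·n² = ½·I(m,n,1)·(m+n−1)(m+n+2); (iii) I(m−1,n,2)·m² + I(m,n−1,2)·n² = ½·I(m,n,2)·(m+n+3)(m+n) − I(m,n,1)·(m−n). -/

import Mathlib

set_option maxHeartbeats 1600000

noncomputable def Jf (m n : ℕ) : ℝ := ∫ t in (-1:ℝ)..1, (1 + t) ^ m * (1 - t) ^ n

lemma hint (a b : ℕ) : IntervalIntegrable (fun t : ℝ => (1+t)^a * (1-t)^b)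
    MeasureTheory.volume (-1) 1 :=
  (Continuous.mul (by continuity) (by continuity)).intervalIntegrable _ _

lemma Jf_parts (m n : ℕ) :
    ((n:ℝ)+1) * Jf (m+1) n = ((m:ℝ)+1) * Jf m (n+1) := by
  have key : (∫ t in (-1:ℝ)..1,
      (((m:ℝ)+1) * ((1+t)^m * (1-t)^(n+1)) - ((n:ℝ)+1) * ((1+t)^(m+1) * (1-t)^n))) =
      (fun t : ℝ => (1+t)^(m+1) * (1-t)^(n+1)) 1 - (fun t : ℝ => (1+t)^(m+1) * (1-t)^(n+1)) (-1) := by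
    refine intervalIntegral.integral_eq_sub_of_hasDerivAt (f := fun t : ℝ => (1+t)^(m+1) * (1-t)^(n+1)) (fun t ht => ?_) ?_
    · have h1 : HasDerivAt (fun t : ℝ => (1+t)^(m+1)) (((m:ℝ)+1) * (1+t)^m) t := by
        simpa using ((hasDerivAt_id t).const_add 1).fun_pow (m+1)
      have h2 : HasDerivAt (fun t : ℝ => (1-t)^(n+1)) (-(((n:ℝ)+1) * (1-t)^n)) t := by
        simpa using ((hasDerivAt_id t).const_sub 1).fun_pow (n+1)
      have := h1.fun_mul h2
      convert this using 1
      · rfl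
      ring
    · apply Continuous.intervalIntegrable
      continuity
  simp only at key
  rw [intervalIntegral.integral_sub ((hint m (n+1)).const_mul _) ((hint (m+1) n).const_mul _),
    intervalIntegral.integral_const_mul, intervalIntegral.integral_const_mul] at key
  simp at key
  unfold Jf
  linarith [key]

lemma Jf_expand (m n : ℕ) : Jf m (n+1) = 2 * Jf m n - Jf (m+1) n := by
  unfold Jf
  rw [← intervalIntegral.integral_const_mul,
    ← intervalIntegral.integral_sub ((hint m n).const_mul 2) (hint (m+1) n)]
  apply intervalIntegral.integral_congr
  intro t _
  ring

lemma Jf_step (m n : ℕ) :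
    ((m:ℝ)+(n:ℝ)+2) * Jf (m+1) n = 2 * ((m:ℝ)+1) * Jf m n := by
  linear_combination Jf_parts m n + ((m:ℝ)+1) * Jf_expand m n

lemma Jf_step' (m n : ℕ) :
    ((m:ℝ)+(n:ℝ)+2) * Jf m (n+1) = 2 * ((n:ℝ)+1) * Jf m n := by
  linear_combination ((m:ℝ)+(n:ℝ)+2) * Jf_expand m n - Jf_step m n

/-- recursion identities for `I(m,n,k) = ∫_{-1}^1 (1+t)^m (1-t)^n t^k dt`. -/
theorem stmt6 (I : ℕ → ℕ → ℕ → ℝ)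
    (hI : ∀ m n k, I m n k = ∫ t in (-1:ℝ)..1, (1 + t) ^ m * (1 - t) ^ n * t ^ k) :
    ∀ m n : ℕ, 1 ≤ m → 1 ≤ n →
      (I (m - 1) n 0 * (m : ℝ) ^ 2 + I m (n - 1) 0 * (n : ℝ) ^ 2 =
        (1 / 2) * I m n 0 * ((m : ℝ) + (n : ℝ) + 1) * ((m : ℝ) + (n : ℝ))) ∧
      (I (m - 1) n 1 * (m : ℝ) ^ 2 + I m (n - 1) 1 * (n : ℝ) ^ 2 =
        (1 / 2) * I m n 1 * ((m : ℝ) + (n : ℝ) - 1) * ((m : ℝ) + (n : ℝ) + 2)) ∧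
      (I (m - 1) n 2 * (m : ℝ) ^ 2 + I m (n - 1) 2 * (n : ℝ) ^ 2 =
        (1 / 2) * I m n 2 * ((m : ℝ) + (n : ℝ) + 3) * ((m : ℝ) + (n : ℝ))
        - I m n 1 * ((m : ℝ) - (n : ℝ))) := by
  have hI0 : ∀ p q : ℕ, I p q 0 = Jf p q := by
    intro p q
    rw [hI]
    apply intervalIntegral.integral_congr
    intro t _
    ring
  have hI1 : ∀ p q : ℕ, I p q 1 = (Jf (p+1) q - Jf p (q+1)) / 2 := by
    intro p q
    rw [hI]
    unfold Jf
    rw [← intervalIntegral.integral_sub (hint (p+1) q) (hint p (q+1)),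
      ← intervalIntegral.integral_div]
    apply intervalIntegral.integral_congr
    intro t _
    ring
  have hI2 : ∀ p q : ℕ, I p q 2 = Jf p q - Jf (p+1) (q+1) := by
    intro p q
    rw [hI]
    unfold Jf
    rw [← intervalIntegral.integral_sub (hint p q) (hint (p+1) (q+1))]
    apply intervalIntegral.integral_congr
    intro t _
    ring
  intro m n hm hn
  obtain ⟨a, rfl⟩ : ∃ a, m = a + 1 := ⟨m - 1, by omega⟩
  obtain ⟨b, rfl⟩ : ∃ b, n = b + 1 := ⟨n - 1, by omega⟩
  set A : ℝ := (a : ℝ) with hA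
  set B : ℝ := (b : ℝ) with hB
  set X : ℝ := Jf a b with hX
  have hA0 : 0 ≤ A := Nat.cast_nonneg a
  have hB0 : 0 ≤ B := Nat.cast_nonneg b
  have h2 : A + B + 2 ≠ 0 := by positivity
  have h3 : A + B + 3 ≠ 0 := by positivity
  have h4 : A + B + 4 ≠ 0 := by positivity
  have h5 : A + B + 5 ≠ 0 := by positivity
  have hJ10 : Jf (a+1) b = 2*(A+1)*X/(A+B+2) := by
    rw [eq_div_iff h2]; linear_combination Jf_step a b
  have hJ01 : Jf a (b+1) = 2*(B+1)*X/(A+B+2) := by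
    rw [eq_div_iff h2]; linear_combination Jf_step' a b
  have hJ11 : Jf (a+1) (b+1) = 4*(A+1)*(B+1)*X/((A+B+2)*(A+B+3)) := by
    have h := Jf_step' (a+1) b
    push_cast at h
    rw [hJ10] at h
    rw [eq_div_iff (mul_ne_zero h2 h3)]
    field_simp at h
    linear_combination h
  have hJ20 : Jf (a+2) b = 4*(A+1)*(A+2)*X/((A+B+2)*(A+B+3)) := by
    have h := Jf_step (a+1) b
    push_cast at h
    rw [hJ10] at h
    rw [eq_div_iff (mul_ne_zero h2 h3)]
    field_simp at h
    linear_combination h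
  have hJ02 : Jf a (b+2) = 4*(B+1)*(B+2)*X/((A+B+2)*(A+B+3)) := by
    have h := Jf_step' a (b+1)
    push_cast at h
    rw [hJ01] at h
    rw [eq_div_iff (mul_ne_zero h2 h3)]
    field_simp at h
    linear_combination h
  have hJ21 : Jf (a+2) (b+1) = 8*(A+1)*(A+2)*(B+1)*X/((A+B+2)*(A+B+3)*(A+B+4)) := by
    have h := Jf_step (a+1) (b+1)
    push_cast at h
    rw [hJ11] at h
    rw [eq_div_iff (mul_ne_zero (mul_ne_zero h2 h3) h4)]
    field_simp at h
    linear_combination h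
  have hJ12 : Jf (a+1) (b+2) = 8*(A+1)*(B+1)*(B+2)*X/((A+B+2)*(A+B+3)*(A+B+4)) := by
    have h := Jf_step' (a+1) (b+1)
    push_cast at h
    rw [hJ11] at h
    rw [eq_div_iff (mul_ne_zero (mul_ne_zero h2 h3) h4)]
    field_simp at h
    linear_combination h
  have hJ22 : Jf (a+2) (b+2) =
      16*(A+1)*(A+2)*(B+1)*(B+2)*X/((A+B+2)*(A+B+3)*(A+B+4)*(A+B+5)) := by
    have h := Jf_step' (a+2) (b+1)
    push_cast at h
    rw [hJ21] at h
    rw [eq_div_iff (mul_ne_zero (mul_ne_zero (mul_ne_zero h2 h3) h4) h5)]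
    field_simp at h
    linear_combination h
  simp only [Nat.add_sub_cancel]
  refine ⟨?_, ?_, ?_⟩
  · simp only [hI0]
    rw [hJ01, hJ10, hJ11]
    push_cast
    field_simp
    ring
  · simp only [hI1]
    have e1 : a + 1 + 1 = a + 2 := by ring
    have e2 : b + 1 + 1 = b + 2 := by ring
    rw [e1, e2, hJ11, hJ02, hJ20, hJ21, hJ12]
    push_cast
    field_simp
    ring
  · simp only [hI2, hI1]
    have e1 : a + 1 + 1 = a + 2 := by ring
    have e2 : b + 1 + 1 = b + 2 := by ring
    rw [e1, e2, hJ01, hJ12, hJ10, hJ21, hJ11, hJ22]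
    push_cast
    field_simp
    ring
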